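/- Let a, b be rational numbers with a⁷·b⁴·(a + 16b) ≠ 0. Then the point (0, 0) on the elliptic curve y² + a·xy − a²b·y = x³ − ab·x² over ℚ has order exactly 4 in the group of rational points. -/

import Mathlib

lemma some_eq_some_aux {F : Type*} [Field F] {W : WeierstrassCurve.Affine F}
    {x₁ x₂ y₁ y₂ : F} (hx : x₁ = x₂) (hy : y₁ = y₂)
    (h₁ : W.Nonsingular x₁ y₁) (h₂ : W.Nonsingular x₂ y₂) :
    WeierstrassCurve.Affine.Point.some _ _ h₁ = WeierstrassCurve.Affine.Point.some _ _ h₂ := by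
  subst hx; subst hy; rfl

theorem stmt_9 (a b : ℚ) (hΔ : a ^ 7 * b ^ 4 * (a + 16 * b) ≠ 0)
    (h : (⟨a, -(a * b), -(a ^ 2 * b), 0, 0⟩ :
      WeierstrassCurve ℚ).toAffine.Nonsingular 0 0) :
    addOrderOf (WeierstrassCurve.Affine.Point.some 0 0 h) = 4 := by
  let W : WeierstrassCurve.Affine ℚ :=
    (⟨a, -(a * b), -(a ^ 2 * b), 0, 0⟩ : WeierstrassCurve ℚ).toAffine
  have hW : W = (⟨a, -(a * b), -(a ^ 2 * b), 0, 0⟩ : WeierstrassCurve ℚ).toAffine := rfl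
  have ha : a ≠ 0 := fun h0 => hΔ (by rw [h0]; ring)
  have hb : b ≠ 0 := fun h0 => hΔ (by rw [h0]; ring)
  have hy : (0 : ℚ) ≠ W.negY 0 0 := by
    simp only [hW, WeierstrassCurve.Affine.negY]
    intro hc
    exact mul_ne_zero (pow_ne_zero 2 ha) hb (by linarith)
  have hslope : W.slope 0 0 0 0 = 0 := by
    rw [WeierstrassCurve.Affine.slope_of_Y_ne rfl hy]
    simp [hW, WeierstrassCurve.Affine.negY]
  have hx2 : W.addX 0 0 (W.slope 0 0 0 0) = a * b := by
    rw [hslope]; simp [hW]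
  have hy2 : W.addY 0 0 0 (W.slope 0 0 0 0) = 0 := by
    rw [hslope]
    simp [hW, WeierstrassCurve.Affine.addY, WeierstrassCurve.Affine.negAddY,
      WeierstrassCurve.Affine.negY, WeierstrassCurve.Affine.addX]
    ring
  have h2 : W.Nonsingular (a * b) 0 := by
    have := WeierstrassCurve.Affine.nonsingular_add h h (fun hxy => hy hxy.2)
    rwa [hx2, hy2] at this
  have hP2 : WeierstrassCurve.Affine.Point.some _ _ h + WeierstrassCurve.Affine.Point.some _ _ h
      = WeierstrassCurve.Affine.Point.some _ _ h2 := by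
    rw [WeierstrassCurve.Affine.Point.add_of_Y_ne hy]
    exact some_eq_some_aux hx2 hy2 _ _
  have hQ : WeierstrassCurve.Affine.Point.some _ _ h2 + WeierstrassCurve.Affine.Point.some _ _ h2 = 0 := by
    apply WeierstrassCurve.Affine.Point.add_self_of_Y_eq
    simp [hW, WeierstrassCurve.Affine.negY]
    ring
  have h2smul : (2 : ℕ) • WeierstrassCurve.Affine.Point.some _ _ h
      = WeierstrassCurve.Affine.Point.some _ _ h2 := by
    rw [two_smul]; exact hP2
  have key : addOrderOf (WeierstrassCurve.Affine.Point.some _ _ h) = 2 ^ 2 := by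
    apply addOrderOf_eq_prime_pow (p := 2) (n := 1)
    · rw [pow_one, h2smul]
      exact fun hc => by simp at hc
    · show (2 ^ 2 : ℕ) • _ = 0
      rw [pow_succ (2 : ℕ), pow_one, mul_comm (2 : ℕ), mul_smul, h2smul, two_smul]
      exact hQ
  rw [key]
  norm_num
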